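/- Let C be an [n,k] code over F_q with generator matrix G, and let M = aI + bJ with a ≠ 0 be invertible. Then |dim Hull_M(C) − dim Hull(C)| ≤ 1, where Hull(C) = Hull_I(C) is the hull with respect to the standard inner product. -/

import Mathlib

open Matrix

/-- The `M`-dual of a code `C ⊆ F^n`: all `y` with `x M yᵀ = 0` for every `x ∈ C`. -/
def Mdual {F : Type*} [Field F] {n : ℕ} (M : Matrix (Fin n) (Fin n) F)
    (C : Submodule F (Fin n → F)) : Submodule F (Fin n → F) where
  carrier := {y | ∀ x ∈ C, x ⬝ᵥ (M *ᵥ y) = 0}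
  add_mem' := by
    intro y z hy hz x hx
    simp [Matrix.mulVec_add, dotProduct_add, hy x hx, hz x hx]
  zero_mem' := by
    intro x hx
    simp
  smul_mem' := by
    intro c y hy x hx
    simp [Matrix.mulVec_smul, dotProduct_smul, hy x hx]

section Aux

variable {F : Type*} [Field F] {n k : ℕ}

lemma myMem_Mdual_iff (M : Matrix (Fin n) (Fin n) F) (C : Submodule F (Fin n → F))
    (y : Fin n → F) : y ∈ Mdual M C ↔ ∀ x ∈ C, x ⬝ᵥ (M *ᵥ y) = 0 := Iff.rfl

lemma myRank_add_le (A B : Matrix (Fin k) (Fin k) F) :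
    (A + B).rank ≤ A.rank + B.rank := by
  rw [Matrix.rank, Matrix.rank, Matrix.rank, Matrix.mulVecLin_add]
  have hle : LinearMap.range (A.mulVecLin + B.mulVecLin) ≤
      LinearMap.range A.mulVecLin ⊔ LinearMap.range B.mulVecLin := by
    rintro y ⟨x, rfl⟩
    exact Submodule.add_mem_sup ⟨x, rfl⟩ ⟨x, rfl⟩
  exact le_trans (Submodule.finrank_mono hle)
    (Submodule.finrank_add_le_finrank_add_finrank _ _)

lemma myRank_smul (c : F) (hc : c ≠ 0) (A : Matrix (Fin k) (Fin n) F) :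
    (c • A).rank = A.rank := by
  apply le_antisymm
  · have h1 : c • A = (c • (1 : Matrix (Fin k) (Fin k) F)) * A := by
      rw [Matrix.smul_mul, Matrix.one_mul]
    rw [h1]; exact Matrix.rank_mul_le_right _ _
  · have h2 : A = (c⁻¹ • (1 : Matrix (Fin k) (Fin k) F)) * (c • A) := by
      rw [Matrix.smul_mul, Matrix.one_mul, smul_smul, inv_mul_cancel₀ hc, one_smul]
    conv_lhs => rw [h2]
    exact Matrix.rank_mul_le_right _ _

lemma myRank_J_le_one (b : F) (G : Matrix (Fin k) (Fin n) F) :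
    (b • (G * (Matrix.of fun _ _ => (1 : F) : Matrix (Fin n) (Fin n) F) * Gᵀ)).rank ≤ 1 := by
  have key : b • (G * (Matrix.of fun _ _ => (1 : F) : Matrix (Fin n) (Fin n) F) * Gᵀ) =
      (Matrix.of (fun i (_ : Fin 1) => b * ∑ l, G i l)) *
      (Matrix.of (fun (_ : Fin 1) j => ∑ l, G j l)) := by
    ext i j
    simp [Matrix.mul_apply, Finset.mul_sum, Finset.sum_mul, Matrix.transpose_apply,
      mul_comm, mul_assoc, mul_left_comm]
    exact Finset.sum_comm
  rw [key]
  refine le_trans (Matrix.rank_mul_le_left _ _) ?_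
  simpa using Matrix.rank_le_card_width
    (Matrix.of (fun i (_ : Fin 1) => b * ∑ l, G i l))

lemma myDot_key (G : Matrix (Fin k) (Fin n) F) (M : Matrix (Fin n) (Fin n) F)
    (w u : Fin k → F) :
    (G.vecMulLinear w) ⬝ᵥ (M *ᵥ (G.vecMulLinear u)) = w ⬝ᵥ ((G * M * Gᵀ) *ᵥ u) := by
  simp only [Matrix.vecMulLinear_apply]
  rw [← Matrix.mulVec_transpose G u, Matrix.mulVec_mulVec, Matrix.dotProduct_mulVec,
    Matrix.vecMul_vecMul, ← Matrix.dotProduct_mulVec, Matrix.mul_assoc]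

lemma myHull_eq_map (G : Matrix (Fin k) (Fin n) F) (M : Matrix (Fin n) (Fin n) F) :
    (LinearMap.range G.vecMulLinear) ⊓ Mdual M (LinearMap.range G.vecMulLinear)
      = Submodule.map G.vecMulLinear (LinearMap.ker (G * M * Gᵀ).mulVecLin) := by
  ext y
  constructor
  · rintro ⟨⟨u, rfl⟩, hy⟩
    refine ⟨u, ?_, rfl⟩
    simp only [SetLike.mem_coe, LinearMap.mem_ker, Matrix.mulVecLin_apply]
    funext i
    have := hy (G.vecMulLinear (Pi.single i 1)) ⟨_, rfl⟩
    rw [myDot_key] at this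
    simpa [single_dotProduct] using this
  · rintro ⟨u, hu, rfl⟩
    simp only [SetLike.mem_coe, LinearMap.mem_ker, Matrix.mulVecLin_apply] at hu
    refine ⟨⟨u, rfl⟩, ?_⟩
    rintro x ⟨w, rfl⟩
    rw [myDot_key, hu, dotProduct_zero]

lemma myInj (G : Matrix (Fin k) (Fin n) F) (hG : G.rank = k) :
    Function.Injective G.vecMulLinear := by
  have hGT : G.vecMulLinear = Gᵀ.mulVecLin := by
    rw [← Matrix.vecMulLinear_transpose, Matrix.transpose_transpose]
  rw [hGT, ← LinearMap.ker_eq_bot]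
  have hrn := LinearMap.finrank_range_add_finrank_ker Gᵀ.mulVecLin
  have hrk : Gᵀ.rank = k := by rw [Matrix.rank_transpose]; exact hG
  rw [show Module.finrank F (Fin k → F) = k by simp] at hrn
  rw [Matrix.rank] at hrk
  rw [← Submodule.finrank_eq_zero (R := F)]
  omega

lemma myHull_finrank (G : Matrix (Fin k) (Fin n) F) (hG : G.rank = k)
    (M : Matrix (Fin n) (Fin n) F) :
    Module.finrank F ↥((LinearMap.range G.vecMulLinear)
        ⊓ Mdual M (LinearMap.range G.vecMulLinear)) + (G * M * Gᵀ).rank = k := by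
  rw [myHull_eq_map]
  have hinj := myInj G hG
  have heq := (Submodule.equivMapOfInjective G.vecMulLinear hinj
    (LinearMap.ker (G * M * Gᵀ).mulVecLin)).finrank_eq
  rw [← heq]
  have hrn := LinearMap.finrank_range_add_finrank_ker (G * M * Gᵀ).mulVecLin
  rw [show Module.finrank F (Fin k → F) = k by simp] at hrn
  rw [Matrix.rank]
  omega

end Aux

theorem hull_dimension_bound {F : Type*} [Field F] [Fintype F] {n k : ℕ}
    (G : Matrix (Fin k) (Fin n) F) (hG : G.rank = k)
    (C : Submodule F (Fin n → F)) (hC : C = LinearMap.range G.vecMulLinear)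
    (a b : F) (ha : a ≠ 0) (M : Matrix (Fin n) (Fin n) F)
    (hM : M = a • (1 : Matrix (Fin n) (Fin n) F) + b • (Matrix.of fun _ _ => (1 : F)))
    (hMinv : IsUnit M.det) :
    Module.finrank F ↥(C ⊓ Mdual M C)
        ≤ Module.finrank F ↥(C ⊓ Mdual 1 C) + 1 ∧
      Module.finrank F ↥(C ⊓ Mdual 1 C)
        ≤ Module.finrank F ↥(C ⊓ Mdual M C) + 1 := by
  subst hC
  have h1 := myHull_finrank G hG M
  have h2 := myHull_finrank G hG 1
  set J : Matrix (Fin n) (Fin n) F := Matrix.of fun _ _ => (1 : F) with hJ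
  have hAI : G * (1 : Matrix (Fin n) (Fin n) F) * Gᵀ = G * Gᵀ := by
    rw [Matrix.mul_one]
  have hdecomp : G * M * Gᵀ = a • (G * Gᵀ) + b • (G * J * Gᵀ) := by
    rw [hM]
    rw [Matrix.mul_add, Matrix.add_mul, Matrix.mul_smul, Matrix.mul_one,
      Matrix.smul_mul, Matrix.mul_smul, Matrix.smul_mul]
  have hrank1 : (G * M * Gᵀ).rank ≤ (G * (1 : Matrix (Fin n) (Fin n) F) * Gᵀ).rank + 1 := by
    rw [hdecomp, hAI]
    refine le_trans (myRank_add_le _ _) ?_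
    rw [myRank_smul a ha]
    exact add_le_add_right (myRank_J_le_one b G) _
  have hrank2 : (G * (1 : Matrix (Fin n) (Fin n) F) * Gᵀ).rank ≤ (G * M * Gᵀ).rank + 1 := by
    have hd2 : a • (G * Gᵀ) = G * M * Gᵀ + (-b) • (G * J * Gᵀ) := by
      rw [hdecomp, neg_smul, add_neg_cancel_right]
    rw [hAI, ← myRank_smul a ha (G * Gᵀ), hd2]
    refine le_trans (myRank_add_le _ _) ?_
    exact add_le_add_right (myRank_J_le_one (-b) G) _
  omega
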